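/- Let K be a field of characteristic zero. In the planar Cremona group Cr₂(K), let s be the automorphism with s(x) = x + 1, s(y) = y; let a be the automorphism with a(x) = x, a(y) = y + 1; and let m be the automorphism with m(x) = x, m(y) = x·y. Then the subgroup G of Cr₂(K) generated by {s, a, m} is solvable of derived length exactly 3: the third term of its derived series is trivial, but the second term is not. -/

import Mathlib

set_option maxHeartbeats 1000000
set_option synthInstance.maxHeartbeats 200000


open MvPolynomial

/-- The rational function field `K(X,Y)`, realized as the fraction field of the polynomial
ring in two variables. Its group of `K`-algebra automorphisms is the planar Cremona
group `Cr₂(K)`. -/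
noncomputable abbrev CremonaField (K : Type*) [Field K] : Type _ :=
  FractionRing (MvPolynomial (Fin 2) K)

/-- The image of the first variable in `K(X,Y)`. -/
noncomputable def genX (K : Type*) [Field K] : CremonaField K :=
  algebraMap (MvPolynomial (Fin 2) K) (CremonaField K) (X 0)

/-- The image of the second variable in `K(X,Y)`. -/
noncomputable def genY (K : Type*) [Field K] : CremonaField K :=
  algebraMap (MvPolynomial (Fin 2) K) (CremonaField K) (X 1)

open scoped commutatorElement

section Aux

variable {K : Type*} [Field K]

lemma cremona_inj :
    Function.Injective (algebraMap (MvPolynomial (Fin 2) K) (CremonaField K)) :=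
  IsFractionRing.injective _ _

lemma genX_add_const_ne_zero (c : K) : genX K + algebraMap K (CremonaField K) c ≠ 0 := by
  intro h
  have h2 : algebraMap (MvPolynomial (Fin 2) K) (CremonaField K) (X 0 + C c) = 0 := by
    rw [map_add]
    rw [show algebraMap (MvPolynomial (Fin 2) K) (CremonaField K) (C c)
        = algebraMap K (CremonaField K) c from
      (IsScalarTower.algebraMap_apply K (MvPolynomial (Fin 2) K) (CremonaField K) c).symm]
    exact h
  have h3 : (X 0 + C c : MvPolynomial (Fin 2) K) = 0 := by
    apply cremona_inj
    rw [h2, map_zero]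
  have := congrArg (coeff (Finsupp.single 0 1)) h3
  simp [coeff_X, coeff_C, Finsupp.single_eq_zero, eq_comm] at this

lemma genX_ne_zero : genX K ≠ 0 := by
  have := genX_add_const_ne_zero (K := K) 0
  simpa using this

lemma genX_ne_one : genX K ≠ 1 := by
  have := genX_add_const_ne_zero (K := K) (-1)
  intro h
  apply this
  rw [h, map_neg, map_one]
  ring

lemma cremona_ext {σ τ : CremonaField K ≃ₐ[K] CremonaField K}
    (hx : σ (genX K) = τ (genX K)) (hy : σ (genY K) = τ (genY K)) : σ = τ := by
  have key : (σ : CremonaField K →+* CremonaField K) = (τ : CremonaField K →+* CremonaField K) := by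
    apply IsLocalization.ringHom_ext (nonZeroDivisors (MvPolynomial (Fin 2) K))
    apply MvPolynomial.ringHom_ext
    · intro k
      simp only [RingHom.comp_apply]
      rw [show algebraMap (MvPolynomial (Fin 2) K) (CremonaField K) (C k)
          = algebraMap K (CremonaField K) k from
        (IsScalarTower.algebraMap_apply K (MvPolynomial (Fin 2) K) (CremonaField K) k).symm]
      simp [AlgEquiv.commutes]
    · intro i
      fin_cases i
      · exact hx
      · exact hy
  exact AlgEquiv.ext fun z => DFunLike.congr_fun key z


noncomputable def FXk (K : Type*) [Field K] : IntermediateField K (CremonaField K) :=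
  IntermediateField.adjoin K {genX K}

lemma genX_mem_FXk : genX K ∈ FXk K :=
  IntermediateField.subset_adjoin K _ rfl

lemma fix_of_fixX {σ : CremonaField K ≃ₐ[K] CremonaField K} (h : σ (genX K) = genX K) :
    ∀ z ∈ FXk K, σ z = z := by
  intro z hz
  induction hz using IntermediateField.adjoin_induction with
  | mem w hw => rcases hw with rfl; exact h
  | algebraMap k => exact σ.commutes k
  | add p q hp hq ihp ihq => rw [map_add, ihp, ihq]
  | inv p hp ih => rw [map_inv₀, ih]
  | mul p q hp hq ihp ihq => rw [map_mul, ihp, ihq]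

lemma maps_of_shiftX {σ : CremonaField K ≃ₐ[K] CremonaField K} (c : K)
    (h : σ (genX K) = genX K + algebraMap K (CremonaField K) c) :
    ∀ z ∈ FXk K, σ z ∈ FXk K := by
  intro z hz
  induction hz using IntermediateField.adjoin_induction with
  | mem w hw =>
    rcases hw with rfl
    rw [h]
    exact add_mem genX_mem_FXk ((FXk K).algebraMap_mem c)
  | algebraMap k => rw [AlgEquiv.commutes]; exact (FXk K).algebraMap_mem k
  | add p q hp hq ihp ihq => rw [map_add]; exact add_mem ihp ihq
  | inv p hp ih => rw [map_inv₀]; exact inv_mem ih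
  | mul p q hp hq ihp ihq => rw [map_mul]; exact mul_mem ihp ihq

lemma algEquiv_ne_zero (σ : CremonaField K ≃ₐ[K] CremonaField K) {z : CremonaField K}
    (h : z ≠ 0) : σ z ≠ 0 :=
  fun h0 => h (σ.injective (by rw [h0, map_zero]))

lemma aut_inv_eq_symm (σ : CremonaField K ≃ₐ[K] CremonaField K) : σ⁻¹ = σ.symm := rfl


def fixXGroup (K : Type*) [Field K] : Subgroup (CremonaField K ≃ₐ[K] CremonaField K) where
  carrier := {σ | σ (genX K) = genX K}
  one_mem' := rfl
  mul_mem' {σ τ} hσ hτ := by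
    show (σ * τ) (genX K) = genX K
    rw [AlgEquiv.mul_apply, hτ, hσ]
  inv_mem' {σ} hσ := by
    show σ⁻¹ (genX K) = genX K
    rw [aut_inv_eq_symm]
    exact (AlgEquiv.symm_apply_eq σ).mpr hσ.symm

lemma mem_fixXGroup {σ : CremonaField K ≃ₐ[K] CremonaField K} :
    σ ∈ fixXGroup K ↔ σ (genX K) = genX K := Iff.rfl

def affGroup (K : Type*) [Field K] : Subgroup (CremonaField K ≃ₐ[K] CremonaField K) where
  carrier := {σ | (∃ c : K, σ (genX K) = genX K + algebraMap K (CremonaField K) c) ∧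
    ∃ u ∈ FXk K, ∃ f ∈ FXk K, u ≠ 0 ∧ σ (genY K) = u * genY K + f}
  one_mem' := ⟨⟨0, by simp⟩, 1, one_mem _, 0, zero_mem _, one_ne_zero, by simp⟩
  mul_mem' {σ τ} hσ hτ := by
    obtain ⟨⟨c, hcx⟩, u, hu, f, hf, hu0, huy⟩ := hσ
    obtain ⟨⟨d, hdx⟩, v, hv, g, hg, hv0, hvy⟩ := hτ
    refine ⟨⟨c + d, ?_⟩, σ v * u, mul_mem (maps_of_shiftX c hcx v hv) hu,
      σ v * f + σ g, add_mem (mul_mem (maps_of_shiftX c hcx v hv) hf) (maps_of_shiftX c hcx g hg),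
      mul_ne_zero (algEquiv_ne_zero σ hv0) hu0, ?_⟩
    · show σ (τ (genX K)) = _
      rw [hdx, map_add, hcx, AlgEquiv.commutes, map_add]
      ring
    · show σ (τ (genY K)) = _
      rw [hvy, map_add, map_mul, huy]
      ring
  inv_mem' {σ} hσ := by
    obtain ⟨⟨c, hcx⟩, u, hu, f, hf, hu0, huy⟩ := hσ
    have hcx' : σ.symm (genX K) = genX K + algebraMap K (CremonaField K) (-c) := by
      rw [AlgEquiv.symm_apply_eq, map_add, hcx, AlgEquiv.commutes, map_neg]
      ring
    have hsu0 : σ.symm u ≠ 0 := algEquiv_ne_zero σ.symm hu0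
    refine ⟨⟨-c, by rw [aut_inv_eq_symm]; exact hcx'⟩, (σ.symm u)⁻¹,
      inv_mem (maps_of_shiftX (-c) hcx' u hu),
      -((σ.symm u)⁻¹ * σ.symm f),
      neg_mem (mul_mem (inv_mem (maps_of_shiftX (-c) hcx' u hu)) (maps_of_shiftX (-c) hcx' f hf)),
      inv_ne_zero hsu0, ?_⟩
    rw [aut_inv_eq_symm, AlgEquiv.symm_apply_eq]
    simp only [map_add, map_neg, map_mul, map_inv₀, AlgEquiv.apply_symm_apply, huy]
    field_simp
    ring

def transGroup (K : Type*) [Field K] : Subgroup (CremonaField K ≃ₐ[K] CremonaField K) where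
  carrier := {σ | σ (genX K) = genX K ∧ ∃ f ∈ FXk K, σ (genY K) = genY K + f}
  one_mem' := ⟨rfl, 0, zero_mem _, by simp⟩
  mul_mem' {σ τ} hσ hτ := by
    obtain ⟨hσx, f, hf, hσy⟩ := hσ
    obtain ⟨hτx, g, hg, hτy⟩ := hτ
    refine ⟨by show σ (τ _) = _; rw [hτx, hσx], f + g, add_mem hf hg, ?_⟩
    show σ (τ (genY K)) = _
    rw [hτy, map_add, hσy, fix_of_fixX hσx g hg]
    ring
  inv_mem' {σ} hσ := by
    obtain ⟨hσx, f, hf, hσy⟩ := hσ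
    have hx' : σ.symm (genX K) = genX K := (AlgEquiv.symm_apply_eq σ).mpr hσx.symm
    refine ⟨by rw [aut_inv_eq_symm]; exact hx', -f, neg_mem hf, ?_⟩
    rw [aut_inv_eq_symm, AlgEquiv.symm_apply_eq, map_add, hσy, map_neg, fix_of_fixX hσx f hf]
    ring


lemma symm_shiftX {σ : CremonaField K ≃ₐ[K] CremonaField K} (c : K)
    (h : σ (genX K) = genX K + algebraMap K (CremonaField K) c) :
    σ.symm (genX K) = genX K + algebraMap K (CremonaField K) (-c) := by
  rw [AlgEquiv.symm_apply_eq, map_add, h, AlgEquiv.commutes, map_neg]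
  ring

lemma commutator_le_self {G : Type*} [Group G] (H : Subgroup G) : ⁅H, H⁆ ≤ H :=
  (Subgroup.commutator_le).mpr fun g hg h hh =>
    commutatorElement_def g h ▸
      mul_mem (mul_mem (mul_mem hg hh) (H.inv_mem hg)) (H.inv_mem hh)

lemma comm_aff_le : ⁅affGroup K, affGroup K⁆ ≤ affGroup K ⊓ fixXGroup K := by
  refine le_inf (commutator_le_self _) ?_
  rw [Subgroup.commutator_le]
  intro σ hσ τ hτ
  obtain ⟨⟨c, hcx⟩, -⟩ := hσ
  obtain ⟨⟨d, hdx⟩, -⟩ := hτ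
  have hcx' := symm_shiftX c hcx
  have hdx' := symm_shiftX d hdx
  show ⁅σ, τ⁆ (genX K) = genX K
  simp only [commutatorElement_def, AlgEquiv.mul_apply, aut_inv_eq_symm, hdx', map_add,
    AlgEquiv.commutes, hcx', hdx, hcx, map_neg]
  ring

lemma comm_S1_le_trans :
    ⁅affGroup K ⊓ fixXGroup K, affGroup K ⊓ fixXGroup K⁆ ≤ transGroup K := by
  rw [Subgroup.commutator_le]
  intro σ hσ τ hτ
  rw [Subgroup.mem_inf] at hσ hτ
  obtain ⟨⟨-, u, hu, f, hf, hu0, hσy⟩, hσx⟩ := hσ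
  obtain ⟨⟨-, v, hv, g, hg, hv0, hτy⟩, hτx⟩ := hτ
  rw [mem_fixXGroup] at hσx hτx
  have hσx' : σ.symm (genX K) = genX K := (AlgEquiv.symm_apply_eq σ).mpr hσx.symm
  have hτx' : τ.symm (genX K) = genX K := (AlgEquiv.symm_apply_eq τ).mpr hτx.symm
  have Hσ := fix_of_fixX hσx
  have Hτ := fix_of_fixX hτx
  have Hσs := fix_of_fixX hσx'
  have Hτs := fix_of_fixX hτx'
  have hσabsy : σ.symm (genY K) = u⁻¹ * genY K - u⁻¹ * f := by
    rw [AlgEquiv.symm_apply_eq]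
    simp only [map_sub, map_mul, map_inv₀, Hσ u hu, Hσ f hf, hσy]
    field_simp
    ring
  have hτabsy : τ.symm (genY K) = v⁻¹ * genY K - v⁻¹ * g := by
    rw [AlgEquiv.symm_apply_eq]
    simp only [map_sub, map_mul, map_inv₀, Hτ v hv, Hτ g hg, hτy]
    field_simp
    ring
  refine ⟨?_, u⁻¹ * f + u⁻¹ * v⁻¹ * g - u⁻¹ * v⁻¹ * f - v⁻¹ * g, ?_, ?_⟩
  · show ⁅σ, τ⁆ (genX K) = genX K
    simp only [commutatorElement_def, AlgEquiv.mul_apply, aut_inv_eq_symm, hσx, hτx, hσx', hτx']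
  · exact sub_mem (sub_mem (add_mem (mul_mem (inv_mem hu) hf)
      (mul_mem (mul_mem (inv_mem hu) (inv_mem hv)) hg))
      (mul_mem (mul_mem (inv_mem hu) (inv_mem hv)) hf)) (mul_mem (inv_mem hv) hg)
  · show ⁅σ, τ⁆ (genY K) = _
    simp only [commutatorElement_def, AlgEquiv.mul_apply, aut_inv_eq_symm, hτabsy, map_sub,
      map_mul, map_inv₀, Hσs v hv, Hσs g hg, hσabsy, Hτ u hu, Hτ f hf, Hτ v hv, Hτ g hg, hτy,
      Hσ u hu, Hσ v hv, Hσ f hf, Hσ g hg, hσy, map_add, Hτs u hu, Hτs f hf, Hτs v hv, Hτs g hg,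
      Hσs u hu, Hσs f hf]
    linear_combination (genY K * (u⁻¹ * u) + u⁻¹ * f) * inv_mul_cancel₀ hv0 +
      genY K * inv_mul_cancel₀ hu0

lemma comm_trans_bot : ⁅transGroup K, transGroup K⁆ = ⊥ := by
  rw [eq_bot_iff, Subgroup.commutator_le]
  intro σ hσ τ hτ
  obtain ⟨hσx, f, hf, hσy⟩ := hσ
  obtain ⟨hτx, g, hg, hτy⟩ := hτ
  rw [Subgroup.mem_bot]
  have hσx' : σ.symm (genX K) = genX K := (AlgEquiv.symm_apply_eq σ).mpr hσx.symm
  have hτx' : τ.symm (genX K) = genX K := (AlgEquiv.symm_apply_eq τ).mpr hτx.symm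
  have Hσ := fix_of_fixX hσx
  have Hτ := fix_of_fixX hτx
  have Hσs := fix_of_fixX hσx'
  have hσabsy : σ.symm (genY K) = genY K - f := by
    rw [AlgEquiv.symm_apply_eq, map_sub, hσy, Hσ f hf]
    ring
  have hτabsy : τ.symm (genY K) = genY K - g := by
    rw [AlgEquiv.symm_apply_eq, map_sub, hτy, Hτ g hg]
    ring
  apply cremona_ext
  · show ⁅σ, τ⁆ (genX K) = (1 : CremonaField K ≃ₐ[K] CremonaField K) (genX K)
    simp only [commutatorElement_def, AlgEquiv.mul_apply, aut_inv_eq_symm, AlgEquiv.one_apply,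
      hσx, hτx, hσx', hτx']
  · show ⁅σ, τ⁆ (genY K) = (1 : CremonaField K ≃ₐ[K] CremonaField K) (genY K)
    simp only [commutatorElement_def, AlgEquiv.mul_apply, aut_inv_eq_symm, AlgEquiv.one_apply,
      hτabsy, map_sub, map_add, hσabsy, Hσs g hg, Hσs f hf, hτy, Hτ f hf, Hτ g hg, hσy,
      Hσ g hg, Hσ f hf]
    ring

end Aux

theorem statement5 (K : Type*) [Field K] [CharZero K]
    (s a m : CremonaField K ≃ₐ[K] CremonaField K)
    (hsx : s (genX K) = genX K + 1) (hsy : s (genY K) = genY K)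
    (hax : a (genX K) = genX K) (hay : a (genY K) = genY K + 1)
    (hmx : m (genX K) = genX K) (hmy : m (genY K) = genX K * genY K) :
    derivedSeries (Subgroup.closure {s, a, m} : Subgroup (CremonaField K ≃ₐ[K] CremonaField K)) 3 = ⊥ ∧
    derivedSeries (Subgroup.closure {s, a, m} : Subgroup (CremonaField K ≃ₐ[K] CremonaField K)) 2 ≠ ⊥ := by
  have hx0 : genX K ≠ 0 := genX_ne_zero
  have hxp1 : genX K + 1 ≠ 0 := by
    have := genX_add_const_ne_zero (K := K) 1
    simpa using this
  have hs : s ∈ affGroup K :=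
    ⟨⟨1, by rw [hsx, map_one]⟩, 1, one_mem _, 0, zero_mem _, one_ne_zero, by rw [hsy]; ring⟩
  have ha : a ∈ affGroup K :=
    ⟨⟨0, by rw [hax, map_zero, add_zero]⟩, 1, one_mem _, 1, one_mem _, one_ne_zero,
      by rw [hay]; ring⟩
  have hm : m ∈ affGroup K :=
    ⟨⟨0, by rw [hmx, map_zero, add_zero]⟩, genX K, genX_mem_FXk, 0, zero_mem _, hx0,
      by rw [hmy]; ring⟩
  set G := (Subgroup.closure {s, a, m} : Subgroup (CremonaField K ≃ₐ[K] CremonaField K))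
    with hGdef
  have hGle : G ≤ affGroup K := by
    rw [hGdef, Subgroup.closure_le]
    rintro σ hσ
    simp only [Set.mem_insert_iff, Set.mem_singleton_iff] at hσ
    rcases hσ with rfl | rfl | rfl
    · exact hs
    · exact ha
    · exact hm
  have hmap0 : (derivedSeries ↥G 0).map G.subtype = G := by
    rw [derivedSeries_zero, ← MonoidHom.range_eq_map, Subgroup.range_subtype]
  have hmap1 : (derivedSeries ↥G 1).map G.subtype ≤ affGroup K ⊓ fixXGroup K := by
    have e : derivedSeries ↥G 1 = ⁅derivedSeries ↥G 0, derivedSeries ↥G 0⁆ := rfl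
    rw [e, Subgroup.map_commutator, hmap0]
    exact le_trans (Subgroup.commutator_mono hGle hGle) comm_aff_le
  have hmap2 : (derivedSeries ↥G 2).map G.subtype ≤ transGroup K := by
    have e : derivedSeries ↥G 2 = ⁅derivedSeries ↥G 1, derivedSeries ↥G 1⁆ := rfl
    rw [e, Subgroup.map_commutator]
    exact le_trans (Subgroup.commutator_mono hmap1 hmap1) comm_S1_le_trans
  have hmap3 : (derivedSeries ↥G 3).map G.subtype ≤ ⊥ := by
    have e : derivedSeries ↥G 3 = ⁅derivedSeries ↥G 2, derivedSeries ↥G 2⁆ := rfl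
    rw [e, Subgroup.map_commutator]
    exact le_trans (Subgroup.commutator_mono hmap2 hmap2) (le_of_eq comm_trans_bot)
  constructor
  · exact (Subgroup.map_eq_bot_iff_of_injective (derivedSeries ↥G 3)
      (Subgroup.subtype_injective G)).mp (le_bot_iff.mp hmap3)
  · intro hbot
    have hsG : s ∈ G := Subgroup.subset_closure (by simp)
    have haG : a ∈ G := Subgroup.subset_closure (by simp)
    have hmG : m ∈ G := Subgroup.subset_closure (by simp)
    have hμmem : ⁅(⟨m, hmG⟩ : ↥G), (⟨s, hsG⟩ : ↥G)⁆ ∈ derivedSeries ↥G 1 :=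
      Subgroup.commutator_mem_commutator (Subgroup.mem_top _) (Subgroup.mem_top _)
    have hαmem : ⁅(⟨a, haG⟩ : ↥G), (⟨m, hmG⟩ : ↥G)⁆ ∈ derivedSeries ↥G 1 :=
      Subgroup.commutator_mem_commutator (Subgroup.mem_top _) (Subgroup.mem_top _)
    have hν : ⁅⁅(⟨m, hmG⟩ : ↥G), (⟨s, hsG⟩ : ↥G)⁆, ⁅(⟨a, haG⟩ : ↥G), (⟨m, hmG⟩ : ↥G)⁆⁆ ∈
        derivedSeries ↥G 2 :=
      Subgroup.commutator_mem_commutator hμmem hαmem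
    rw [hbot, Subgroup.mem_bot] at hν
    have hν' : ⁅⁅m, s⁆, ⁅a, m⁆⁆ = (1 : CremonaField K ≃ₐ[K] CremonaField K) := by
      have h := congrArg G.subtype hν
      simpa [map_commutatorElement] using h
    -- inverse values of the generators
    have hsx' : s.symm (genX K) = genX K - 1 := by
      rw [AlgEquiv.symm_apply_eq, map_sub, hsx, map_one]; ring
    have hsy' : s.symm (genY K) = genY K := (AlgEquiv.symm_apply_eq s).mpr hsy.symm
    have hax' : a.symm (genX K) = genX K := (AlgEquiv.symm_apply_eq a).mpr hax.symm
    have hay' : a.symm (genY K) = genY K - 1 := by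
      rw [AlgEquiv.symm_apply_eq, map_sub, hay, map_one]; ring
    have hmx' : m.symm (genX K) = genX K := (AlgEquiv.symm_apply_eq m).mpr hmx.symm
    have hmy' : m.symm (genY K) = (genX K)⁻¹ * genY K := by
      rw [AlgEquiv.symm_apply_eq, map_mul, map_inv₀, hmx, hmy, ← mul_assoc,
        inv_mul_cancel₀ hx0, one_mul]
    -- values of the two inner commutators
    have hμx : ⁅m, s⁆ (genX K) = genX K := by
      simp only [commutatorElement_def, AlgEquiv.mul_apply, aut_inv_eq_symm, map_sub, map_add,
        map_one, hsx', hmx', hsx, hmx]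
      ring
    have hμy : ⁅m, s⁆ (genY K) = (genX K + 1)⁻¹ * (genX K * genY K) := by
      simp only [commutatorElement_def, AlgEquiv.mul_apply, aut_inv_eq_symm, map_mul, map_inv₀,
        map_add, map_one, hsy', hmy', hsx, hsy, hmx, hmy]
    have hαx : ⁅a, m⁆ (genX K) = genX K := by
      simp only [commutatorElement_def, AlgEquiv.mul_apply, aut_inv_eq_symm, hmx', hax', hmx, hax]
    have hαy : ⁅a, m⁆ (genY K) = genY K + 1 - (genX K)⁻¹ := by
      simp only [commutatorElement_def, AlgEquiv.mul_apply, aut_inv_eq_symm, map_mul, map_inv₀,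
        map_sub, map_add, map_one, hmy', hax', hay', hmx, hmy, hax, hay]
      linear_combination (genY K + 1) * inv_mul_cancel₀ hx0
    have hμx' : (⁅m, s⁆).symm (genX K) = genX K := (AlgEquiv.symm_apply_eq _).mpr hμx.symm
    have hμy' : (⁅m, s⁆).symm (genY K) = (genX K + 1) * (genX K)⁻¹ * genY K := by
      rw [AlgEquiv.symm_apply_eq]
      simp only [map_mul, map_inv₀, map_add, map_one, hμx, hμy]
      field_simp
    have hαy' : (⁅a, m⁆).symm (genY K) = genY K - 1 + (genX K)⁻¹ := by
      rw [AlgEquiv.symm_apply_eq]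
      simp only [map_add, map_sub, map_inv₀, map_one, hαx, hαy]
      ring
    have hstep : ⁅⁅m, s⁆, ⁅a, m⁆⁆ (genY K)
        = genY K + (genX K)⁻¹ - (genX K)⁻¹ * (genX K)⁻¹ := by
      rw [commutatorElement_def]
      simp only [AlgEquiv.mul_apply, aut_inv_eq_symm]
      simp only [map_add, map_sub, map_mul, map_inv₀, map_one, hαy', hμx', hμy',
        hαx, hαy, hμx, hμy]
      field_simp
      ring
    rw [hν'] at hstep
    simp only [AlgEquiv.one_apply] at hstep
    have h9 : (genX K)⁻¹ - (genX K)⁻¹ * (genX K)⁻¹ = 0 := by linear_combination -hstep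
    have hinv0 : (genX K)⁻¹ ≠ 0 := inv_ne_zero hx0
    have h13 : 1 - (genX K)⁻¹ = 0 := by
      rcases mul_eq_zero.mp (show (genX K)⁻¹ * (1 - (genX K)⁻¹) = 0 by linear_combination h9)
        with h | h
      · exact absurd h hinv0
      · exact h
    have h14 : (genX K)⁻¹ = 1 := by linear_combination -h13
    exact genX_ne_one (by rw [← inv_inv (genX K), h14, inv_one])
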